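/- Let H be a graph whose vertex set is partitioned into sets U and W such that every edge of H either has both endpoints in U or has one endpoint in U and one in W (i.e., W is an independent set). If H contains a path on 4k'+1 vertices for some integer k' ≥ 1, then H contains a path on 2k'+1 vertices both of whose endpoints lie in U. -/

import Mathlib

open SimpleGraph

/-- Take the first `m` edges of a path. -/
lemma walk_take {V : Type*} {H : SimpleGraph V} :
    ∀ {x y : V} (p : H.Walk x y), p.IsPath → ∀ m, m ≤ p.length →
    ∃ q : H.Walk x (p.getVert m), q.IsPath ∧ q.length = m ∧
      ∀ v ∈ q.support, v ∈ p.support := by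
  intro x y p hp m
  induction p generalizing m with
  | nil =>
    intro hm
    simp only [SimpleGraph.Walk.length_nil, Nat.le_zero] at hm
    subst hm
    exact ⟨SimpleGraph.Walk.nil, by simp⟩
  | @cons a b c h q ih =>
    intro hm
    match m with
    | 0 =>
      refine ⟨SimpleGraph.Walk.nil.copy rfl (SimpleGraph.Walk.getVert_zero _).symm,
        (SimpleGraph.Walk.isPath_copy _ _ _).mpr (by simp), (SimpleGraph.Walk.length_copy _ _ _).trans (by simp), ?_⟩
      simp [SimpleGraph.Walk.getVert_zero]
    | (m+1) =>
      have hq : q.IsPath := hp.of_cons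
      obtain ⟨r, hr1, hr2, hr3⟩ := ih hq m (by simpa using hm)
      refine ⟨SimpleGraph.Walk.cons h (r.copy rfl (SimpleGraph.Walk.getVert_cons_succ q h).symm),
        ?_, by simpa using hr2, ?_⟩
      · rw [SimpleGraph.Walk.cons_isPath_iff]
        refine ⟨by simpa using hr1, fun hmem => ?_⟩
        have : a ∈ q.support := hr3 a (by simpa using hmem)
        exact (SimpleGraph.Walk.cons_isPath_iff h q).mp hp |>.2 this
      · intro v hv
        simp only [SimpleGraph.Walk.support_cons, SimpleGraph.Walk.support_copy,
          List.mem_cons] at hv ⊢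
        rcases hv with rfl | hv
        · left; rfl
        · right; exact hr3 v hv

/-- Extract the sub-path from vertex `i` to vertex `i+m` of a path. -/
lemma walk_sub {V : Type*} {H : SimpleGraph V} :
    ∀ {x y : V} (p : H.Walk x y), p.IsPath → ∀ i m, i + m ≤ p.length →
    ∃ q : H.Walk (p.getVert i) (p.getVert (i + m)), q.IsPath ∧ q.length = m := by
  intro x y p hp i
  induction p generalizing i with
  | nil =>
    intro m hm
    simp only [SimpleGraph.Walk.length_nil, Nat.le_zero, Nat.add_eq_zero] at hm
    obtain ⟨rfl, rfl⟩ := hm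
    exact ⟨SimpleGraph.Walk.nil, by simp, by simp⟩
  | @cons a b c h q ih =>
    intro m hm
    match i with
    | 0 =>
      obtain ⟨r, hr1, hr2, _⟩ := walk_take (SimpleGraph.Walk.cons h q) hp m (by simpa using hm)
      exact ⟨r.copy (SimpleGraph.Walk.getVert_zero _).symm (by simp), by simpa using hr1,
        by simpa using hr2⟩
    | (i+1) =>
      have hq : q.IsPath := hp.of_cons
      obtain ⟨r, hr1, hr2⟩ := ih hq i m (by rw [SimpleGraph.Walk.length_cons] at hm; omega)
      have e1 : (SimpleGraph.Walk.cons h q).getVert (i+1) = q.getVert i :=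
        SimpleGraph.Walk.getVert_cons_succ q h
      have e2 : (SimpleGraph.Walk.cons h q).getVert (i+1+m) = q.getVert (i+m) := by
        have : i + 1 + m = (i + m) + 1 := by omega
        rw [this]
        exact SimpleGraph.Walk.getVert_cons_succ q h
      exact ⟨(r.copy e1.symm e2.symm), (SimpleGraph.Walk.isPath_copy _ _ _).mpr hr1,
        (SimpleGraph.Walk.length_copy _ _ _).trans hr2⟩

/-- Combinatorial core: suppose of every two consecutive indices in `[0,4k]` at least
one satisfies `P`, but no index `i ≤ 2k` has both `P i` and `P (i+2k)`. Contradiction. -/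
lemma key_comb (P : ℕ → Prop) (k : ℕ) (hk : 1 ≤ k)
    (h1 : ∀ i, i < 4 * k → (P i ∨ P (i + 1)))
    (h2 : ∀ i, i ≤ 2 * k → ¬(P i ∧ P (i + 2 * k))) : False := by
  -- no two consecutive indices ≤ 2k both satisfy P
  have hne : ∀ i, i + 1 ≤ 2 * k → ¬(P i ∧ P (i + 1)) := by
    intro i hi ⟨hpi, hpi1⟩
    have hA := h2 i (by omega)
    have hB := h2 (i + 1) hi
    have hC := h1 (i + 2 * k) (by omega)
    have : i + 1 + 2 * k = i + 2 * k + 1 := by omega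
    rw [this] at hB
    rcases hC with hc | hc
    · exact hA ⟨hpi, hc⟩
    · exact hB ⟨hpi1, hc⟩
  have halt : ∀ i, i + 1 ≤ 2 * k → (P (i + 1) ↔ ¬ P i) := by
    intro i hi
    constructor
    · intro hp1 hp0; exact hne i hi ⟨hp0, hp1⟩
    · intro hnp
      rcases h1 i (by omega) with hc | hc
      · exact absurd hc hnp
      · exact hc
  -- P (2*j) ↔ P 0 for 2*j ≤ 2*k
  have heven : ∀ j, 2 * j ≤ 2 * k → (P (2 * j) ↔ P 0) := by
    intro j
    induction j with
    | zero => simp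
    | succ j ih =>
      intro hj
      have e : 2 * (j + 1) = (2 * j + 1) + 1 := by omega
      rw [e, halt (2 * j + 1) (by omega), halt (2 * j) (by omega), not_not]
      exact ih (by omega)
  have h2k : P (2 * k) ↔ P 0 := heven k le_rfl
  have h0 := h2 0 (by omega)
  simp only [Nat.zero_add] at h0
  have hnp0 : ¬ P 0 := fun hp => h0 ⟨hp, h2k.mpr hp⟩
  have hnp2k : ¬ P (2 * k) := fun hp => hnp0 (h2k.mp hp)
  have hp1 : P 1 := by
    rcases h1 0 (by omega) with hc | hc
    · exact absurd hc hnp0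
    · simpa using hc
  have hp2k1 : P (2 * k + 1) := by
    rcases h1 (2 * k) (by omega) with hc | hc
    · exact absurd hc hnp2k
    · exact hc
  exact h2 1 (by omega) ⟨hp1, by simpa [Nat.add_comm] using hp2k1⟩

/-- if every edge of `H` has at least one endpoint in `U`
(i.e. the complement `W` of `U` is an independent set), and `H` contains a
path on `4k'+1` vertices (a path of length `4k'`), then `H` contains a path
on `2k'+1` vertices (length `2k'`) both of whose endpoints lie in `U`. -/
theorem stmt1 {V : Type*} (H : SimpleGraph V) (U : Set V)
    (hW : ∀ a b, H.Adj a b → a ∈ U ∨ b ∈ U)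
    (k' : ℕ) (hk' : 1 ≤ k')
    (hpath : ∃ (x y : V) (p : H.Walk x y), p.IsPath ∧ p.length = 4 * k') :
    ∃ (u v : V) (q : H.Walk u v), u ∈ U ∧ v ∈ U ∧ q.IsPath ∧ q.length = 2 * k' := by
  obtain ⟨x, y, p, hp, hlen⟩ := hpath
  set P : ℕ → Prop := fun i => p.getVert i ∈ U with hP
  have h1 : ∀ i, i < 4 * k' → (P i ∨ P (i + 1)) := by
    intro i hi
    exact hW _ _ (p.adj_getVert_succ (by omega))
  by_cases hex : ∃ i, i ≤ 2 * k' ∧ P i ∧ P (i + 2 * k')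
  · obtain ⟨i, hi, hpi, hpi2⟩ := hex
    obtain ⟨q, hq1, hq2⟩ := walk_sub p hp i (2 * k') (by omega)
    exact ⟨_, _, q, hpi, hpi2, hq1, hq2⟩
  · exact absurd (key_comb P k' hk' h1 (fun i hi h => hex ⟨i, hi, h⟩)) id
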